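/- Consider equation (5.12) with f₁(w) = w, b = 1 and d = 0. Then for every K ∈ (0,1) and every τ₀ ∈ ℝ, the function w(τ) = √(1 − K² sin²(τ − τ₀)) − K cos(τ − τ₀) is a positive periodic solution of (5.12) with least period 2π; conversely, every positive nonconstant periodic solution of (5.12) is of this form. In particular, the period function of the positive periodic solutions is constant, equal to 2π. -/

import Mathlib

open Real Set Filter Topology

noncomputable section

/-- A solution of equation (5.12) on a set `I`, with derivative `w'`:
`(d/dτ)[w'/√(w² + w'²)] − b w/√(w² + w'²) + f₁(w) − d·sgn(w) = 0`,
where `(w, w') ≠ (0, 0)` everywhere on `I`. -/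
def Sol512On (b d : ℝ) (f₁ w w' : ℝ → ℝ) (I : Set ℝ) : Prop :=
  ContinuousOn w' I ∧
  (∀ τ ∈ I, HasDerivWithinAt w (w' τ) I τ) ∧
  (∀ τ ∈ I, (w τ, w' τ) ≠ (0, 0)) ∧
  ∃ F' : ℝ → ℝ,
    (∀ τ ∈ I, HasDerivWithinAt
      (fun s => w' s / Real.sqrt (w s ^ 2 + w' s ^ 2)) (F' τ) I τ) ∧
    (∀ τ ∈ I, F' τ - b * w τ / Real.sqrt (w τ ^ 2 + w' τ ^ 2) + f₁ (w τ)
      - d * Real.sign (w τ) = 0)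

/-- Conditions (3.8) on the nonlinearity `f₁`: odd, continuous on `[0,∞)`,
`f₁(s)/s → 1` as `s → 0⁺`, `f₁(s) → ∞` as `s → ∞`, strictly increasing on `(0,∞)`. -/
def Cond38 (f₁ : ℝ → ℝ) : Prop :=
  (∀ s, f₁ (-s) = -f₁ s) ∧ ContinuousOn f₁ (Ici 0) ∧
  Tendsto (fun s => f₁ s / s) (𝓝[>] (0:ℝ)) (𝓝 1) ∧
  Tendsto f₁ atTop atTop ∧
  StrictMonoOn f₁ (Ioi 0)

/-- A function taking both positive and negative values. -/
def SignChanging (ω : ℝ → ℝ) : Prop := (∃ σ, 0 < ω σ) ∧ (∃ σ, ω σ < 0)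

/-- `T` is the least period of `ω`. -/
def IsLeastPeriod (ω : ℝ → ℝ) (T : ℝ) : Prop :=
  0 < T ∧ Function.Periodic ω T ∧ ∀ T', 0 < T' → Function.Periodic ω T' → T ≤ T'

lemma aux_Spos {K : ℝ} (hK : K ∈ Ioo (0:ℝ) 1) (θ : ℝ) :
    0 < 1 - K ^ 2 * Real.sin θ ^ 2 := by
  obtain ⟨h0, h1⟩ := hK
  nlinarith [Real.sin_sq_le_one θ, sq_nonneg (Real.sin θ)]

lemma aux_wpos {K : ℝ} (hK : K ∈ Ioo (0:ℝ) 1) (θ : ℝ) :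
    0 < Real.sqrt (1 - K ^ 2 * Real.sin θ ^ 2) - K * Real.cos θ := by
  obtain ⟨h0, h1⟩ := hK
  have hA := aux_Spos ⟨h0, h1⟩ θ
  have hS : 0 < Real.sqrt (1 - K ^ 2 * Real.sin θ ^ 2) := Real.sqrt_pos.2 hA
  have hS2 : Real.sqrt (1 - K ^ 2 * Real.sin θ ^ 2) ^ 2 = 1 - K ^ 2 * Real.sin θ ^ 2 :=
    Real.sq_sqrt hA.le
  nlinarith [Real.sin_sq_add_cos_sq θ, sq_nonneg (Real.sqrt (1 - K ^ 2 * Real.sin θ ^ 2) - K * Real.cos θ), sq_nonneg (Real.sqrt (1 - K ^ 2 * Real.sin θ ^ 2) + K * Real.cos θ)]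

lemma aux_least {K : ℝ} (hK : K ∈ Ioo (0:ℝ) 1) (τ₀ : ℝ) :
    IsLeastPeriod
      (fun τ => Real.sqrt (1 - K ^ 2 * Real.sin (τ - τ₀) ^ 2) - K * Real.cos (τ - τ₀))
      (2 * π) := by
  obtain ⟨h0, h1⟩ := hK
  refine ⟨by positivity, ?_, ?_⟩
  · intro x
    have h1' : x + 2 * π - τ₀ = (x - τ₀) + 2 * π := by ring
    simp only [h1', Real.sin_add_two_pi, Real.cos_add_two_pi]
  · intro T' hT' hper
    have h := hper τ₀
    simp only [sub_self] at h
    have hA := aux_Spos ⟨h0, h1⟩ T'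
    simp only [Real.sin_zero, Real.cos_zero] at h
    norm_num at h
    -- h : √(1 - K^2 sin T'^2) - K cos T' = 1 - K
    have hB : Real.sqrt (1 - K ^ 2 * Real.sin T' ^ 2) = 1 - K + K * Real.cos T' := by
      linarith
    have hsq : 1 - K ^ 2 * Real.sin T' ^ 2 = (1 - K + K * Real.cos T') ^ 2 := by
      rw [← hB, Real.sq_sqrt hA.le]
    have hsc := Real.sin_sq_add_cos_sq T'
    have key : (1 - Real.cos T') * (2 * K * (1 - K)) = 0 := by
      linear_combination hsq + K ^ 2 * hsc
    have hc : Real.cos T' = 1 := by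
      rcases mul_eq_zero.mp key with h' | h'
      · linarith
      · nlinarith
    obtain ⟨n, hn⟩ := (Real.cos_eq_one_iff T').1 hc
    have hπ : 0 < π := Real.pi_pos
    have hn1 : 1 ≤ n := by
      by_contra hlt
      push_neg at hlt
      have : (n : ℝ) ≤ 0 := by exact_mod_cast Int.lt_add_one_iff.mp (by omega)
      nlinarith
    calc 2 * π = (1:ℝ) * (2 * π) := by ring
    _ ≤ (n : ℝ) * (2 * π) := by
        have : (1:ℝ) ≤ (n:ℝ) := by exact_mod_cast hn1
        nlinarith
    _ = T' := hn

lemma aux_forward {K : ℝ} (hK : K ∈ Ioo (0:ℝ) 1) (τ₀ : ℝ) :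
    ∃ w' : ℝ → ℝ,
      Sol512On 1 0 (fun s => s)
        (fun τ => Real.sqrt (1 - K ^ 2 * Real.sin (τ - τ₀) ^ 2) - K * Real.cos (τ - τ₀))
        w' Set.univ := by
  set S : ℝ → ℝ := fun τ => Real.sqrt (1 - K ^ 2 * Real.sin (τ - τ₀) ^ 2) with hSdef
  set w : ℝ → ℝ := fun τ => S τ - K * Real.cos (τ - τ₀) with hwdef
  set W : ℝ → ℝ := fun τ => K * Real.sin (τ - τ₀) * w τ / S τ with hWdef
  have hA : ∀ τ, 0 < 1 - K ^ 2 * Real.sin (τ - τ₀) ^ 2 := fun τ => aux_Spos hK _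
  have hS : ∀ τ, 0 < S τ := fun τ => Real.sqrt_pos.2 (hA τ)
  have hS2 : ∀ τ, S τ ^ 2 = 1 - K ^ 2 * Real.sin (τ - τ₀) ^ 2 :=
    fun τ => Real.sq_sqrt (hA τ).le
  have hw : ∀ τ, 0 < w τ := fun τ => aux_wpos hK _
  -- continuity of S, w, W
  have hScont : Continuous S := by
    apply Real.continuous_sqrt.comp
    continuity
  have hwcont : Continuous w := by
    apply hScont.sub
    continuity
  have hWcont : Continuous W := by
    apply Continuous.div
    · exact (continuous_const.mul (Real.continuous_sin.comp (by continuity))).mul hwcont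
    · exact hScont
    · exact fun τ => (hS τ).ne'
  -- derivatives
  have hst : ∀ τ : ℝ, HasDerivAt (fun s : ℝ => s - τ₀) 1 τ :=
    fun τ => (hasDerivAt_id τ).sub_const τ₀
  have hsin : ∀ τ, HasDerivAt (fun s => Real.sin (s - τ₀)) (Real.cos (τ - τ₀)) τ := by
    intro τ
    exact ((Real.hasDerivAt_sin (τ - τ₀)).comp τ (hst τ)).congr_deriv (mul_one _)
  have hcos : ∀ τ, HasDerivAt (fun s => Real.cos (s - τ₀)) (-Real.sin (τ - τ₀)) τ := by
    intro τ
    exact ((Real.hasDerivAt_cos (τ - τ₀)).comp τ (hst τ)).congr_deriv (mul_one _)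
  have hinner : ∀ τ, HasDerivAt (fun s => 1 - K ^ 2 * Real.sin (s - τ₀) ^ 2)
      (-(K ^ 2 * (2 * Real.sin (τ - τ₀) * Real.cos (τ - τ₀)))) τ := by
    intro τ
    have h2 : HasDerivAt (fun s => Real.sin (s - τ₀) ^ 2)
        (2 * Real.sin (τ - τ₀) * Real.cos (τ - τ₀)) τ := by
      have := (hsin τ).pow 2
      refine this.congr_deriv ?_
      symm
      ring
    simpa using (h2.const_mul (K ^ 2)).const_sub 1
  have hSder : ∀ τ, HasDerivAt S
      (-(K ^ 2 * (2 * Real.sin (τ - τ₀) * Real.cos (τ - τ₀))) / (2 * S τ)) τ :=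
    fun τ => (hinner τ).sqrt (hA τ).ne'
  have hwder : ∀ τ, HasDerivAt w (W τ) τ := by
    intro τ
    have := (hSder τ).sub ((hcos τ).const_mul K)
    refine this.congr_deriv ?_
    symm
    have h1 : S τ ≠ 0 := (hS τ).ne'
    rw [hWdef, hwdef]
    field_simp
    ring
  -- pointwise identities
  have hrho : ∀ τ, Real.sqrt (w τ ^ 2 + W τ ^ 2) = w τ / S τ := by
    intro τ
    have h1 : w τ ^ 2 + W τ ^ 2 = (w τ / S τ) ^ 2 := by
      rw [hWdef]
      have hs2 := hS2 τ
      have := (hS τ).ne'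
      field_simp
      nlinarith [hS2 τ]
    rw [h1, Real.sqrt_sq (div_nonneg (hw τ).le (hS τ).le)]
  have hufun : (fun s => W s / Real.sqrt (w s ^ 2 + W s ^ 2))
      = fun s => K * Real.sin (s - τ₀) := by
    funext s
    have h1 : S s ≠ 0 := (hS s).ne'
    have h2 : w s ≠ 0 := (hw s).ne'
    rw [hrho s, hWdef]
    field_simp
  refine ⟨W, hWcont.continuousOn, ?_, ?_, fun τ => K * Real.cos (τ - τ₀), ?_, ?_⟩
  · intro τ _
    exact (hwder τ).hasDerivWithinAt
  · intro τ _
    simp only [ne_eq, Prod.mk.injEq, not_and]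
    intro h
    exact absurd h (hw τ).ne'
  · intro τ _
    rw [hufun]
    exact ((hsin τ).const_mul K).hasDerivWithinAt
  · intro τ _
    have h1 : S τ ≠ 0 := (hS τ).ne'
    have h2 : w τ ≠ 0 := (hw τ).ne'
    rw [hrho τ]
    have hx : 1 * w τ / (w τ / S τ) = S τ := by field_simp
    rw [hx]
    simp only [hwdef, zero_mul, sub_zero]
    ring

lemma aux_converse (w w' : ℝ → ℝ) (hsol : Sol512On 1 0 (fun s => s) w w' Set.univ)
    (hpos : ∀ τ, 0 < w τ) (hnc : ∃ σ₁ σ₂, w σ₁ ≠ w σ₂) :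
    ∃ K ∈ Ioo (0:ℝ) 1, ∃ τ₀ : ℝ, ∀ τ,
      w τ = Real.sqrt (1 - K ^ 2 * Real.sin (τ - τ₀) ^ 2) - K * Real.cos (τ - τ₀) := by
  obtain ⟨hcont, hd, hne, F', hF, heq⟩ := hsol
  have hd' : ∀ τ, HasDerivAt w (w' τ) τ :=
    fun τ => hasDerivWithinAt_univ.mp (hd τ (mem_univ τ))
  set ρ : ℝ → ℝ := fun τ => Real.sqrt (w τ ^ 2 + w' τ ^ 2) with hρdef
  have hsum : ∀ τ, 0 < w τ ^ 2 + w' τ ^ 2 :=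
    fun τ => lt_of_lt_of_le (pow_pos (hpos τ) 2) (le_add_of_nonneg_right (sq_nonneg _))
  have hρ : ∀ τ, 0 < ρ τ := fun τ => Real.sqrt_pos.2 (hsum τ)
  have hρ2 : ∀ τ, ρ τ ^ 2 = w τ ^ 2 + w' τ ^ 2 := fun τ => Real.sq_sqrt (hsum τ).le
  set u : ℝ → ℝ := fun τ => w' τ / ρ τ with hudef
  set v : ℝ → ℝ := fun τ => w τ / ρ τ with hvdef
  have hv : ∀ τ, 0 < v τ := fun τ => div_pos (hpos τ) (hρ τ)
  have huv : ∀ τ, u τ ^ 2 + v τ ^ 2 = 1 := by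
    intro τ
    rw [hudef, hvdef]
    have h1 : ρ τ ≠ 0 := (hρ τ).ne'
    field_simp
    linarith [hρ2 τ]
  have hvu : ∀ τ, v τ = Real.sqrt (1 - u τ ^ 2) := by
    intro τ
    have h1 : 1 - u τ ^ 2 = v τ ^ 2 := by linarith [huv τ]
    rw [h1, Real.sqrt_sq (hv τ).le]
  have hF' : ∀ τ, F' τ = v τ - w τ := by
    intro τ
    have h0 := heq τ (mem_univ τ)
    simp only [one_mul, zero_mul, sub_zero] at h0
    have hvτ : v τ = w τ / Real.sqrt (w τ ^ 2 + w' τ ^ 2) := rfl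
    rw [hvτ]
    linarith
  have huder : ∀ τ, HasDerivAt u (v τ - w τ) τ := by
    intro τ
    have h := hasDerivWithinAt_univ.mp (hF τ (mem_univ τ))
    rw [hF' τ] at h
    exact h
  have hwval : ∀ τ, w' τ = u τ * w τ / v τ := by
    intro τ
    have h1 : ρ τ ≠ 0 := (hρ τ).ne'
    have h2 : w τ ≠ 0 := (hpos τ).ne'
    rw [hudef, hvdef]
    field_simp
  have hvder : ∀ τ, HasDerivAt v (-(u τ * (v τ - w τ)) / v τ) τ := by
    intro τ
    have hvfun : v = fun s => Real.sqrt (1 - u s ^ 2) := funext hvu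
    rw [hvfun]
    have hin : HasDerivAt (fun s => 1 - u s ^ 2) (-(2 * u τ * (v τ - w τ))) τ := by
      have h2 : HasDerivAt (fun s => u s ^ 2) (2 * u τ * (v τ - w τ)) τ := by
        have := (huder τ).pow 2
        refine this.congr_deriv ?_
        symm
        ring
      simpa using h2.const_sub 1
    have hne0 : 1 - u τ ^ 2 ≠ 0 := by
      have := huv τ
      have := hv τ
      nlinarith
    have := hin.sqrt hne0
    convert this using 1
    rw [← hvu τ, show -(2 * u τ * (v τ - w τ)) = 2 * -(u τ * (v τ - w τ)) by ring,
      mul_div_mul_left _ _ (two_ne_zero), ← hvfun]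
  have hgder : ∀ τ, HasDerivAt (fun s => v s - w s) (-(u τ)) τ := by
    intro τ
    have := (hvder τ).sub (hd' τ)
    refine this.congr_deriv ?_
    symm
    rw [hwval τ]
    have h1 : v τ ≠ 0 := (hv τ).ne'
    field_simp
    ring
  set g : ℝ → ℝ := fun s => v s - w s with hgdef
  have huder' : ∀ τ, HasDerivAt u (g τ) τ := huder
  -- p and q are constant
  have hpder : ∀ τ, HasDerivAt (fun s => g s * Real.cos s + u s * Real.sin s) 0 τ := by
    intro τ
    have := ((hgder τ).mul (Real.hasDerivAt_cos τ)).add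
      ((huder' τ).mul (Real.hasDerivAt_sin τ))
    refine this.congr_deriv ?_
    symm
    ring
  have hqder : ∀ τ, HasDerivAt (fun s => -(g s) * Real.sin s + u s * Real.cos s) 0 τ := by
    intro τ
    have := (((hgder τ).neg).mul (Real.hasDerivAt_sin τ)).add
      ((huder' τ).mul (Real.hasDerivAt_cos τ))
    refine this.congr_deriv ?_
    symm
    rw [Pi.neg_apply]
    ring
  have hpconst : ∀ τ, g τ * Real.cos τ + u τ * Real.sin τ = g 0 := by
    intro τ
    have := is_const_of_deriv_eq_zero (f := fun s => g s * Real.cos s + u s * Real.sin s)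
      (fun s => (hpder s).differentiableAt) (fun s => (hpder s).deriv) τ 0
    simpa using this
  have hqconst : ∀ τ, -(g τ) * Real.sin τ + u τ * Real.cos τ = u 0 := by
    intro τ
    have := is_const_of_deriv_eq_zero (f := fun s => -(g s) * Real.sin s + u s * Real.cos s)
      (fun s => (hqder s).differentiableAt) (fun s => (hqder s).deriv) τ 0
    simpa using this
  have hgval : ∀ τ, g τ = g 0 * Real.cos τ - u 0 * Real.sin τ := by
    intro τ
    have h1 := hpconst τ
    have h2 := hqconst τ
    have hsc := Real.sin_sq_add_cos_sq τ
    linear_combination Real.cos τ * h1 - Real.sin τ * h2 - g τ * hsc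
  have huval : ∀ τ, u τ = g 0 * Real.sin τ + u 0 * Real.cos τ := by
    intro τ
    have h1 := hpconst τ
    have h2 := hqconst τ
    have hsc := Real.sin_sq_add_cos_sq τ
    linear_combination Real.sin τ * h1 + Real.cos τ * h2 - u τ * hsc
  -- not both zero
  have hnz : ¬ (g 0 = 0 ∧ u 0 = 0) := by
    rintro ⟨hg0, hu0⟩
    have hw1 : ∀ τ, w τ = 1 := by
      intro τ
      have hu : u τ = 0 := by rw [huval τ, hg0, hu0]; ring
      have hgz : g τ = 0 := by rw [hgval τ, hg0, hu0]; ring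
      have : v τ = 1 := by rw [hvu τ, hu]; simp
      have : v τ - w τ = 0 := hgz
      linarith
    obtain ⟨σ₁, σ₂, hσ⟩ := hnc
    exact hσ (by rw [hw1 σ₁, hw1 σ₂])
  set K : ℝ := Real.sqrt (g 0 ^ 2 + u 0 ^ 2) with hKdef
  have hKpos : 0 < K := by
    apply Real.sqrt_pos.2
    rcases not_and_or.mp hnz with h | h
    · positivity
    · positivity
  have hK2 : K ^ 2 = g 0 ^ 2 + u 0 ^ 2 := Real.sq_sqrt (by positivity)
  -- angle
  set z : ℂ := Complex.ofReal (g 0) + Complex.ofReal (-(u 0)) * Complex.I with hzdef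
  have hzre : z.re = g 0 := by simp [hzdef]
  have hzim : z.im = -(u 0) := by simp [hzdef]
  have habs : ‖z‖ = K := by
    rw [Complex.norm_def, Complex.normSq_apply, hzre, hzim, hKdef]
    ring_nf
  have hz0 : z ≠ 0 := by
    intro h
    rw [h] at habs
    simp at habs
    exact hKpos.ne' habs.symm
  set τ₀ : ℝ := z.arg with hτ₀def
  have hcos0 : g 0 = K * Real.cos τ₀ := by
    rw [hτ₀def, Complex.cos_arg hz0, hzre, habs]
    field_simp
  have hsin0 : u 0 = -(K * Real.sin τ₀) := by
    rw [hτ₀def, Complex.sin_arg, hzim, habs]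
    field_simp
  have hgK : ∀ τ, g τ = K * Real.cos (τ - τ₀) := by
    intro τ
    rw [hgval τ, hcos0, hsin0, Real.cos_sub]
    ring
  have huK : ∀ τ, u τ = K * Real.sin (τ - τ₀) := by
    intro τ
    rw [huval τ, hcos0, hsin0, Real.sin_sub]
    ring
  have hwform : ∀ τ, w τ = Real.sqrt (1 - K ^ 2 * Real.sin (τ - τ₀) ^ 2)
      - K * Real.cos (τ - τ₀) := by
    intro τ
    have h1 : w τ = v τ - g τ := by rw [hgdef]; ring
    rw [h1, hvu τ, huK τ, hgK τ]
    ring_nf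
  have hK1 : K < 1 := by
    have := hpos τ₀
    rw [hwform τ₀] at this
    simp at this
    linarith
  exact ⟨K, ⟨hKpos, hK1⟩, τ₀, hwform⟩

theorem statement18 :
    (∀ K ∈ Ioo (0:ℝ) 1, ∀ τ₀ : ℝ, ∃ w' : ℝ → ℝ,
      Sol512On 1 0 (fun s => s)
        (fun τ => Real.sqrt (1 - K ^ 2 * Real.sin (τ - τ₀) ^ 2) - K * Real.cos (τ - τ₀))
        w' Set.univ ∧
      (∀ τ, 0 < Real.sqrt (1 - K ^ 2 * Real.sin (τ - τ₀) ^ 2) - K * Real.cos (τ - τ₀)) ∧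
      IsLeastPeriod
        (fun τ => Real.sqrt (1 - K ^ 2 * Real.sin (τ - τ₀) ^ 2) - K * Real.cos (τ - τ₀))
        (2 * π)) ∧
    (∀ w w' : ℝ → ℝ, Sol512On 1 0 (fun s => s) w w' Set.univ →
      (∀ τ, 0 < w τ) → (∃ T, 0 < T ∧ Function.Periodic w T) →
      (∃ σ₁ σ₂, w σ₁ ≠ w σ₂) →
      (∃ K ∈ Ioo (0:ℝ) 1, ∃ τ₀ : ℝ, ∀ τ,
        w τ = Real.sqrt (1 - K ^ 2 * Real.sin (τ - τ₀) ^ 2) - K * Real.cos (τ - τ₀)) ∧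
      IsLeastPeriod w (2 * π)) := by
  constructor
  · intro K hK τ₀
    obtain ⟨W, hW⟩ := aux_forward hK τ₀
    exact ⟨W, hW, fun τ => aux_wpos hK _, aux_least hK τ₀⟩
  · intro w w' hsol hpos _hper hnc
    obtain ⟨K, hK, τ₀, hform⟩ := aux_converse w w' hsol hpos hnc
    refine ⟨⟨K, hK, τ₀, hform⟩, ?_⟩
    have hw : w = fun τ => Real.sqrt (1 - K ^ 2 * Real.sin (τ - τ₀) ^ 2)
        - K * Real.cos (τ - τ₀) := funext hform
    rw [hw]
    exact aux_least hK τ₀
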